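/- Let k be an even integer and t an odd integer with 0 < t < k. Let H = (V,E) be a k-uniform hypergraph with n vertices, m ≥ 1 edges, and minimum degree δ, and let λ be the least element of the set {k·∑_{e∈E} ∏_{i∈e} x_i : x ∈ ℝ^V, ∑_{i∈V} x_i^k = 1}. If α_t(H) = t(km − nλ)·(−λ)^{t/(k−t)} / ( (k−t)·δ^{k/(k−t)} + (kδ − tλ)·(−λ)^{t/(k−t)} ), then there exists a t-independent set S with |S| = α_t(H) such that every vertex in S has degree δ and every vertex i ∉ S satisfies |{e ∈ E(i) : e ∩ S ≠ ∅}| = ( (−λ)^{k/(k−t)} + d_i·(−λ)^{t/(k−t)} ) / ( δ^{t/(k−t)} + (−λ)^{t/(k−t)} ). -/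

import Mathlib

open Finset

-- L2: homogeneity
lemma hyp_homog {V : Type*} [Fintype V] [DecidableEq V] (k : ℕ) (hk : Even k) (hk0 : 0 < k)
    (E : Finset (Finset V)) (huniform : ∀ e ∈ E, e.card = k) (lam : ℝ)
    (hlam : IsLeast {y : ℝ | ∃ x : V → ℝ, ∑ i, x i ^ k = 1 ∧
      y = k * ∑ e ∈ E, ∏ i ∈ e, x i} lam)
    (y : V → ℝ) : lam * (∑ i, y i ^ k) ≤ k * ∑ e ∈ E, ∏ i ∈ e, y i := by
  set c : ℝ := ∑ i, y i ^ k with hc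
  have hc0 : 0 ≤ c := Finset.sum_nonneg fun i _ => hk.pow_nonneg _
  rcases eq_or_lt_of_le hc0 with h0 | hpos
  · -- c = 0 : all y i = 0
    have hy : ∀ i, y i = 0 := by
      intro i
      have := (Finset.sum_eq_zero_iff_of_nonneg (fun i _ => hk.pow_nonneg (y i))).1 h0.symm i (mem_univ i)
      exact pow_eq_zero_iff hk0.ne' |>.1 this
    have : ∀ e ∈ E, ∏ i ∈ e, y i = 0 := by
      intro e he
      have hcard : e.card = k := huniform e he
      have hne : e.Nonempty := Finset.card_pos.1 (by omega)
      exact Finset.prod_eq_zero hne.choose_spec (hy _)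
    rw [← h0, Finset.sum_congr rfl this]
    simp
  · -- c > 0
    set z : V → ℝ := fun i => c ^ (-(1:ℝ)/k) * y i with hz
    have hck : (c ^ (-(1:ℝ)/k)) ^ k = c⁻¹ := by
      rw [← Real.rpow_natCast (c ^ (-(1:ℝ)/k)) k, ← Real.rpow_mul hpos.le]
      rw [div_mul_cancel₀]
      · exact Real.rpow_neg_one c
      · exact_mod_cast hk0.ne'
    have hz1 : ∑ i, z i ^ k = 1 := by
      simp only [hz, mul_pow]
      rw [← Finset.mul_sum, hck, ← hc, inv_mul_cancel₀ hpos.ne']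
    have hmem : (k : ℝ) * ∑ e ∈ E, ∏ i ∈ e, z i ∈ {y : ℝ | ∃ x : V → ℝ, ∑ i, x i ^ k = 1 ∧
      y = k * ∑ e ∈ E, ∏ i ∈ e, x i} := ⟨z, hz1, rfl⟩
    have hle := hlam.2 hmem
    have hzprod : ∀ e ∈ E, ∏ i ∈ e, z i = c⁻¹ * ∏ i ∈ e, y i := by
      intro e he
      simp only [hz]
      rw [Finset.prod_mul_distrib, Finset.prod_const, huniform e he]
      rw [hck]
    rw [Finset.sum_congr rfl hzprod, ← Finset.mul_sum] at hle
    have := mul_le_mul_of_nonneg_left hle hpos.le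
    calc lam * c = c * lam := mul_comm _ _
      _ ≤ c * (k * (c⁻¹ * ∑ e ∈ E, ∏ i ∈ e, y i)) := this
      _ = k * ∑ e ∈ E, ∏ i ∈ e, y i := by field_simp

-- L1: lam < 0
lemma hyp_lam_neg {V : Type*} [Fintype V] [DecidableEq V] (k : ℕ) (hk : Even k) (hk2 : 2 ≤ k)
    (E : Finset (Finset V)) (huniform : ∀ e ∈ E, e.card = k) (hm : 1 ≤ E.card) (lam : ℝ)
    (hlam : IsLeast {y : ℝ | ∃ x : V → ℝ, ∑ i, x i ^ k = 1 ∧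
      y = k * ∑ e ∈ E, ∏ i ∈ e, x i} lam) : lam < 0 := by
  obtain ⟨e₀, he₀⟩ : ∃ e, e ∈ E := Finset.card_pos.1 (by omega)
  have hcard : e₀.card = k := huniform e₀ he₀
  obtain ⟨v, hv⟩ : ∃ v, v ∈ e₀ := Finset.card_pos.1 (by omega)
  have hkpos : (0:ℝ) < k := by positivity
  set c : ℝ := ((k:ℝ)⁻¹) ^ ((1:ℝ)/k) with hcdef
  have hcpos : 0 < c := Real.rpow_pos_of_pos (by positivity) _
  have hck : c ^ k = (k:ℝ)⁻¹ := by
    rw [← Real.rpow_natCast c k, hcdef, ← Real.rpow_mul (by positivity)]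
    rw [one_div_mul_cancel hkpos.ne', Real.rpow_one]
  set x : V → ℝ := fun i => if i = v then -c else if i ∈ e₀ then c else 0 with hx
  have hxk : ∀ i, x i ^ k = if i ∈ e₀ then c ^ k else 0 := by
    intro i
    simp only [hx]
    by_cases h1 : i = v
    · subst h1; simp [hv, hk.neg_pow]
    · by_cases h2 : i ∈ e₀ <;> simp [h1, h2] <;> omega
  have hsum1 : ∑ i, x i ^ k = 1 := by
    rw [Finset.sum_congr rfl fun i _ => hxk i, Finset.sum_ite_mem,
      Finset.univ_inter, Finset.sum_const, hcard, hck, nsmul_eq_mul,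
      mul_inv_cancel₀ hkpos.ne']
  have hprod0 : ∀ e ∈ E, e ≠ e₀ → ∏ i ∈ e, x i = 0 := by
    intro e he hne
    have : ¬ e ⊆ e₀ := by
      intro hss
      exact hne (Finset.eq_of_subset_of_card_le hss (by rw [hcard, huniform e he]))
    obtain ⟨w, hw, hw0⟩ := Finset.not_subset.1 this
    refine Finset.prod_eq_zero hw ?_
    have hwv : w ≠ v := fun h => hw0 (h ▸ hv)
    simp [hx, hwv, hw0]
  have hprode₀ : ∏ i ∈ e₀, x i = -(c ^ k) := by
    rw [← Finset.prod_erase_mul _ _ hv]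
    have : ∀ i ∈ e₀.erase v, x i = c := by
      intro i hi
      have := Finset.mem_erase.1 hi
      simp [hx, this.1, this.2]
    rw [Finset.prod_congr rfl this, Finset.prod_const, Finset.card_erase_of_mem hv, hcard]
    have hxv : x v = -c := by simp [hx]
    rw [hxv, mul_neg, ← pow_succ]
    congr 2
    omega
  have hsumE : ∑ e ∈ E, ∏ i ∈ e, x i = -(c ^ k) := by
    rw [← Finset.add_sum_erase _ _ he₀, hprode₀,
      Finset.sum_eq_zero fun e he => hprod0 e (Finset.mem_of_mem_erase he)
        (Finset.ne_of_mem_erase he), add_zero]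
  have hmem : (-1 : ℝ) ∈ {y : ℝ | ∃ x : V → ℝ, ∑ i, x i ^ k = 1 ∧
      y = k * ∑ e ∈ E, ∏ i ∈ e, x i} := by
    refine ⟨x, hsum1, ?_⟩
    rw [hsumE, hck]
    field_simp
  have := hlam.2 hmem
  linarith

-- L3: eigen-equation at a minimizer
lemma hyp_eigen {V : Type*} [Fintype V] [DecidableEq V] (k : ℕ) (hk : Even k) (hk0 : 0 < k)
    (E : Finset (Finset V)) (huniform : ∀ e ∈ E, e.card = k) (lam : ℝ)
    (hlam : IsLeast {y : ℝ | ∃ x : V → ℝ, ∑ i, x i ^ k = 1 ∧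
      y = k * ∑ e ∈ E, ∏ i ∈ e, x i} lam)
    (x : V → ℝ) (hx1 : ∑ i, x i ^ k = 1)
    (hx2 : (k : ℝ) * ∑ e ∈ E, ∏ i ∈ e, x i = lam) (v : V) :
    ∑ e ∈ E.filter (fun e => v ∈ e), ∏ j ∈ e.erase v, x j = lam * x v ^ (k - 1) := by
  classical
  set P₀ : ℝ := ∑ e ∈ E.filter (fun e => ¬ v ∈ e), ∏ j ∈ e, x j with hP₀
  set P₁ : ℝ := ∑ e ∈ E.filter (fun e => v ∈ e), ∏ j ∈ e.erase v, x j with hP₁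
  set R : ℝ := ∑ j ∈ Finset.univ \ {v}, x j ^ k with hR
  set F : ℝ → ℝ := fun s => k * P₀ + k * P₁ * s - lam * R - lam * s ^ k with hF
  have hsum_update : ∀ s : ℝ, ∑ j, (Function.update x v s) j ^ k = R + s ^ k := by
    intro s
    have : ∀ j, (Function.update x v s) j ^ k
        = Function.update (fun j => x j ^ k) v (s ^ k) j := by
      intro j
      by_cases h : j = v
      · subst h; simp
      · simp [Function.update_of_ne h]
    rw [Finset.sum_congr rfl fun j _ => this j,
      Finset.sum_update_of_mem (Finset.mem_univ v)]
    ring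
  have hprod_update : ∀ s : ℝ, ∑ e ∈ E, ∏ j ∈ e, (Function.update x v s) j
      = P₀ + s * P₁ := by
    intro s
    rw [← Finset.sum_filter_add_sum_filter_not E (fun e => v ∈ e)]
    have h1 : ∀ e ∈ E.filter (fun e => v ∈ e),
        ∏ j ∈ e, (Function.update x v s) j = s * ∏ j ∈ e.erase v, x j := by
      intro e he
      rw [Finset.prod_update_of_mem (Finset.mem_filter.1 he).2, Finset.erase_eq]
    have h2 : ∀ e ∈ E.filter (fun e => ¬ v ∈ e),
        ∏ j ∈ e, (Function.update x v s) j = ∏ j ∈ e, x j := by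
      intro e he
      refine Finset.prod_congr rfl fun j hj => ?_
      have : j ≠ v := fun h => (Finset.mem_filter.1 he).2 (h ▸ hj)
      exact Function.update_of_ne this _ _
    rw [Finset.sum_congr rfl h1, Finset.sum_congr rfl h2, ← Finset.mul_sum]
    ring
  have hFnn : ∀ s : ℝ, 0 ≤ F s := by
    intro s
    have := hyp_homog k hk hk0 E huniform lam hlam (Function.update x v s)
    rw [hsum_update s, hprod_update s] at this
    simp only [hF]
    nlinarith [this]
  have hR1 : R + x v ^ k = 1 := by
    rw [hR, ← hx1,
      ← Finset.sum_eq_sum_sdiff_singleton_add (Finset.mem_univ v) (fun j => x j ^ k)]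
  have hval : (k : ℝ) * (P₀ + x v * P₁) = lam := by
    rw [← hprod_update (x v), Function.update_eq_self, hx2]
  have hF0 : F (x v) = 0 := by
    simp only [hF]
    linear_combination hval - lam * hR1
  have hmin : IsLocalMin F (x v) := by
    refine Filter.Eventually.of_forall fun s => ?_
    rw [hF0]; exact hFnn s
  have hderiv : HasDerivAt F ((k : ℝ) * P₁ - lam * (k * x v ^ (k - 1))) (x v) := by
    have h1 : HasDerivAt (fun s : ℝ => (k : ℝ) * P₀ + k * P₁ * s) ((k : ℝ) * P₁) (x v) := by
      simpa using ((hasDerivAt_id (x v)).const_mul ((k : ℝ) * P₁)).const_add ((k : ℝ) * P₀)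
    have h2 : HasDerivAt (fun s : ℝ => lam * R + lam * s ^ k)
        (lam * (k * x v ^ (k - 1))) (x v) := by
      simpa using ((hasDerivAt_pow k (x v)).const_mul lam).const_add (lam * R)
    have key : F = fun s : ℝ => ((k:ℝ) * P₀ + k * P₁ * s) - (lam * R + lam * s ^ k) := by
      funext s
      simp only [hF]
      ring
    rw [key]
    exact h1.sub h2
  have hd0 : (k : ℝ) * P₁ - lam * (k * x v ^ (k - 1)) = 0 := by
    rw [← hderiv.deriv]
    exact hmin.deriv_eq_zero
  have hkne : (k : ℝ) ≠ 0 := by positivity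
  exact mul_left_cancel₀ hkne (by linear_combination hd0)

set_option maxHeartbeats 1000000 in
theorem hoffman_bound_even_hypergraph_condition_of_equality
    {V : Type*} [Fintype V] [DecidableEq V]
    (k t : ℕ) (hk : Even k) (ht : Odd t) (ht0 : 0 < t) (htk : t < k)
    (E : Finset (Finset V)) (huniform : ∀ e ∈ E, e.card = k) (hm : 1 ≤ E.card)
    (δ : ℕ) (hδ : IsLeast (Set.range fun i : V => (E.filter fun e => i ∈ e).card) δ)
    (lam : ℝ)
    (hlam : IsLeast {y : ℝ | ∃ x : V → ℝ, ∑ i, x i ^ k = 1 ∧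
      y = k * ∑ e ∈ E, ∏ i ∈ e, x i} lam)
    (α : ℕ)
    (hα : IsGreatest {c : ℕ | ∃ S : Finset V,
      (∀ e ∈ E, (e ∩ S).card = 0 ∨ (e ∩ S).card = t) ∧ S.card = c} α)
    (heq : (α : ℝ) = t * (k * E.card - Fintype.card V * lam) * (-lam) ^ ((t : ℝ) / (k - t)) /
      ((k - t) * (δ : ℝ) ^ ((k : ℝ) / (k - t)) +
        (k * δ - t * lam) * (-lam) ^ ((t : ℝ) / (k - t)))) :
    ∃ S : Finset V,
      (∀ e ∈ E, (e ∩ S).card = 0 ∨ (e ∩ S).card = t) ∧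
      S.card = α ∧
      (∀ i ∈ S, (E.filter fun e => i ∈ e).card = δ) ∧
      (∀ i ∉ S,
        ((E.filter fun e => i ∈ e ∧ (e ∩ S).Nonempty).card : ℝ) =
          ((-lam) ^ ((k : ℝ) / (k - t)) +
            ((E.filter fun e => i ∈ e).card : ℝ) * (-lam) ^ ((t : ℝ) / (k - t))) /
            ((δ : ℝ) ^ ((t : ℝ) / (k - t)) + (-lam) ^ ((t : ℝ) / (k - t)))) := by
  classical
  obtain ⟨S, hS, hScard⟩ := hα.1
  have hk0 : 0 < k := lt_trans ht0 htk
  have hk2 : 2 ≤ k := by obtain ⟨c, hc⟩ := hk; omega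
  have hκ : (0:ℝ) < (k:ℝ) - t := by
    have : (t:ℝ) < k := by exact_mod_cast htk
    linarith
  have hoddkt : Odd (k - t) := Nat.Even.sub_odd htk.le hk ht
  have hlamneg : lam < 0 := hyp_lam_neg k hk hk2 E huniform hm lam hlam
  have hβ : (0:ℝ) < -lam := by linarith
  have hdeg : ∀ i : V, δ ≤ (E.filter fun e => i ∈ e).card := fun i => hδ.2 ⟨i, rfl⟩
  set B : ℝ := (-lam) ^ ((t:ℝ) / ((k:ℝ) - t)) with hBdef
  set D : ℝ := (δ:ℝ) ^ ((t:ℝ) / ((k:ℝ) - t)) with hDdef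
  have hB : 0 < B := Real.rpow_pos_of_pos hβ _
  have hmR : (1:ℝ) ≤ E.card := by exact_mod_cast hm
  have hα_le_n : α ≤ Fintype.card V := hScard ▸ Finset.card_le_univ S
  -- δ > 0
  have δpos : 0 < δ := by
    rcases Nat.eq_zero_or_pos δ with hδ0 | h
    · exfalso
      rw [hδ0] at heq
      have h0r : ((0:ℕ):ℝ) ^ ((k:ℝ) / ((k:ℝ) - t)) = 0 := by
        rw [Nat.cast_zero]
        exact Real.zero_rpow (by positivity)
      rw [h0r] at heq
      have htR : (0:ℝ) < t := by exact_mod_cast ht0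
      have hden : (((k:ℝ) - t) * 0 + ((k:ℝ) * ((0:ℕ):ℝ) - t * lam) * B)
          = ((t:ℝ) * (-lam)) * B := by push_cast; ring
      rw [hden] at heq
      have hdenpos : (0:ℝ) < ((t:ℝ) * (-lam)) * B := by positivity
      have hkey0 := (eq_div_iff hdenpos.ne').1 heq
      have hc0 : ((α:ℝ) * ((t:ℝ) * (-lam))) * B
          = ((t:ℝ) * ((k:ℝ) * E.card - (Fintype.card V) * lam)) * B := by
        linear_combination hkey0
      have hc1 := mul_right_cancel₀ hB.ne' hc0
      have hc2 : ((α:ℝ) * (-lam)) * t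
          = (((k:ℝ) * E.card + (Fintype.card V) * (-lam))) * t := by
        linear_combination hc1
      have hc3 := mul_right_cancel₀ htR.ne' hc2
      have hkm : (0:ℝ) < (k:ℝ) * E.card := by
        have : (2:ℝ) ≤ (k:ℝ) := by exact_mod_cast hk2
        nlinarith [hmR]
      have h2 : (α:ℝ) ≤ Fintype.card V := by exact_mod_cast hα_le_n
      have hfin : ((Fintype.card V : ℝ) - α) * (-lam) = -((k:ℝ) * E.card) := by
        linear_combination -hc3
      have hnn : (0:ℝ) ≤ ((Fintype.card V : ℝ) - α) * (-lam) :=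
        mul_nonneg (by linarith) hβ.le
      linarith
    · exact h
  have hδR : (0:ℝ) < δ := by exact_mod_cast δpos
  have hD : 0 < D := Real.rpow_pos_of_pos hδR _
  -- key relation from heq
  have hδD : (δ:ℝ) ^ ((k:ℝ) / ((k:ℝ) - t)) = (δ:ℝ) * D := by
    rw [show (k:ℝ) / ((k:ℝ) - t) = 1 + (t:ℝ) / ((k:ℝ) - t) by field_simp; ring,
      Real.rpow_add hδR, Real.rpow_one]
  rw [hδD] at heq
  have hDen : (0:ℝ) < ((k:ℝ) - t) * ((δ:ℝ) * D) + ((k:ℝ) * δ - t * lam) * B := by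
    have h1 : (0:ℝ) < (k:ℝ) * δ - t * lam := by
      have ht0R : (0:ℝ) ≤ (t:ℝ) := by positivity
      nlinarith [mul_pos (show (0:ℝ) < (k:ℝ) by positivity) hδR,
        mul_nonneg ht0R hβ.le]
    positivity
  have hkey : (α:ℝ) * (((k:ℝ) - t) * ((δ:ℝ) * D) + ((k:ℝ) * δ - t * lam) * B)
      = t * ((k:ℝ) * E.card - (Fintype.card V) * lam) * B :=
    (eq_div_iff hDen.ne').1 heq
  -- the test vector
  set q : ℝ := (δ:ℝ) / (-lam) with hqdef
  have hq : 0 < q := div_pos hδR hβ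
  set r : ℝ := q ^ ((1:ℝ) / ((k:ℝ) - t)) with hrdef
  have hr : 0 < r := Real.rpow_pos_of_pos hq _
  set T : ℝ := (α:ℝ) * r ^ k + ((Fintype.card V : ℝ) - α) with hTdef
  have hn_sub : (0:ℝ) ≤ (Fintype.card V : ℝ) - α := by
    have : (α:ℝ) ≤ Fintype.card V := by exact_mod_cast hα_le_n
    linarith
  have hT : 0 < T := by
    rcases Nat.eq_zero_or_pos α with h0 | hpos
    · rw [hTdef, h0]
      simp only [Nat.cast_zero, zero_mul, zero_add, sub_zero]
      have hn0 : 0 < Fintype.card V := by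
        obtain ⟨e₀, he₀⟩ := Finset.card_pos.1 hm
        obtain ⟨v, _⟩ := Finset.card_pos.1
          (show 0 < e₀.card by rw [huniform e₀ he₀]; omega)
        exact Fintype.card_pos_iff.2 ⟨v⟩
      exact_mod_cast hn0
    · have : (0:ℝ) < (α:ℝ) * r ^ k := by
        have : (0:ℝ) < (α:ℝ) := by exact_mod_cast hpos
        positivity
      linarith
  set b : ℝ := T ^ (-(1:ℝ) / k) with hbdef
  have hb : 0 < b := Real.rpow_pos_of_pos hT _
  set a : ℝ := r * b with hadef
  have ha : 0 < a := mul_pos hr hb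
  set x : V → ℝ := fun i => if i ∈ S then a else -b with hxdef
  clear_value B D q r T b a x
  -- rpow identities
  have hpowgen : ∀ p : ℕ, r ^ p = q ^ ((p:ℝ) / ((k:ℝ) - t)) := by
    intro p
    rw [hrdef, ← Real.rpow_natCast (q ^ ((1:ℝ) / ((k:ℝ) - t))) p,
      ← Real.rpow_mul hq.le]
    congr 1
    field_simp
  have hrtB : r ^ t * B = D := by
    rw [hpowgen t, hqdef, Real.div_rpow hδR.le hβ.le, ← hDdef, ← hBdef,
      div_mul_cancel₀ _ hB.ne']
  have hrkB : r ^ k * ((-lam) * B) = (δ:ℝ) * D := by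
    have h1 : ((k:ℝ)) / ((k:ℝ) - t) = 1 + (t:ℝ) / ((k:ℝ) - t) := by field_simp; ring
    rw [hpowgen k, hqdef, Real.div_rpow hδR.le hβ.le, h1, Real.rpow_add hδR,
      Real.rpow_add hβ, Real.rpow_one, Real.rpow_one, ← hDdef, ← hBdef]
    exact div_mul_cancel₀ _ (by positivity)
  have hrkt : r ^ (k - t) = q := by
    rw [hpowgen (k - t), Nat.cast_sub htk.le, div_self hκ.ne', Real.rpow_one]
  have hbkT : b ^ k * T = 1 := by
    have : b ^ k = T ^ (-(1:ℝ)) := by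
      rw [hbdef, ← Real.rpow_natCast (T ^ (-(1:ℝ)/k)) k, ← Real.rpow_mul hT.le]
      congr 1
      field_simp
    rw [this, Real.rpow_neg_one, inv_mul_cancel₀ hT.ne']
  have hbk : (0:ℝ) < b ^ k := by positivity
  -- product over any finset
  have hprodF : ∀ F : Finset V, ∏ j ∈ F, x j
      = a ^ (F ∩ S).card * (-b) ^ (F.card - (F ∩ S).card) := by
    intro F
    rw [← Finset.prod_filter_mul_prod_filter_not F (· ∈ S)]
    have h1 : ∏ j ∈ F.filter (· ∈ S), x j = a ^ (F ∩ S).card := by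
      rw [Finset.prod_congr rfl (fun j hj => ?_), Finset.prod_const,
        Finset.filter_mem_eq_inter]
      simp [hxdef, (Finset.mem_filter.1 hj).2]
    have h2 : ∏ j ∈ F.filter (¬ · ∈ S), x j = (-b) ^ (F.card - (F ∩ S).card) := by
      rw [Finset.prod_congr rfl (fun j hj => ?_), Finset.prod_const]
      · congr 1
        have := Finset.card_filter_add_card_filter_not (s := F) (p := (· ∈ S))
        rw [Finset.filter_mem_eq_inter] at this
        omega
      · simp [hxdef, (Finset.mem_filter.1 hj).2]
    rw [h1, h2]
  -- sum over edges
  set m₁ : ℕ := (E.filter fun e => (e ∩ S).Nonempty).card with hm₁def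
  set m₂ : ℕ := (E.filter fun e => ¬ (e ∩ S).Nonempty).card with hm₂def
  have hm12 : m₁ + m₂ = E.card := Finset.card_filter_add_card_filter_not _
  clear_value m₁ m₂
  have hcardt : ∀ e ∈ E, (e ∩ S).Nonempty → (e ∩ S).card = t := by
    intro e he hne
    refine (hS e he).resolve_left ?_
    exact (Finset.card_pos.2 hne).ne'
  have hsumE : ∑ e ∈ E, ∏ i ∈ e, x i
      = (m₁:ℝ) * (-(a ^ t * b ^ (k - t))) + (m₂:ℝ) * b ^ k := by
    rw [← Finset.sum_filter_add_sum_filter_not E (fun e => (e ∩ S).Nonempty)]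
    have h1 : ∀ e ∈ E.filter (fun e => (e ∩ S).Nonempty),
        ∏ i ∈ e, x i = -(a ^ t * b ^ (k - t)) := by
      intro e he
      obtain ⟨heE, hne⟩ := Finset.mem_filter.1 he
      rw [hprodF e, hcardt e heE hne, huniform e heE, hoddkt.neg_pow]
      ring
    have h2 : ∀ e ∈ E.filter (fun e => ¬ (e ∩ S).Nonempty),
        ∏ i ∈ e, x i = b ^ k := by
      intro e he
      obtain ⟨heE, hne⟩ := Finset.mem_filter.1 he
      have h0 : (e ∩ S).card = 0 := by
        rw [Finset.not_nonempty_iff_eq_empty.1 hne, Finset.card_empty]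
      rw [hprodF e, h0, huniform e heE, pow_zero, one_mul, Nat.sub_zero, hk.neg_pow]
    rw [Finset.sum_congr rfl h1, Finset.sum_congr rfl h2, Finset.sum_const,
      Finset.sum_const, nsmul_eq_mul, nsmul_eq_mul, ← hm₁def, ← hm₂def]
  -- normalization
  have hx1 : ∑ i, x i ^ k = 1 := by
    rw [← Finset.sum_add_sum_compl S (fun i => x i ^ k)]
    have hS1 : ∑ i ∈ S, x i ^ k = (α:ℝ) * a ^ k := by
      have h : ∀ i ∈ S, x i ^ k = a ^ k := fun i hi => by simp [hxdef, hi]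
      rw [Finset.sum_congr rfl h, Finset.sum_const, hScard, nsmul_eq_mul]
    have hS2 : ∑ i ∈ Sᶜ, x i ^ k = ((Fintype.card V : ℝ) - α) * b ^ k := by
      have h : ∀ i ∈ Sᶜ, x i ^ k = b ^ k := by
        intro i hi
        have hni : i ∉ S := Finset.mem_compl.1 hi
        simp [hxdef, hni, hk.neg_pow]
      rw [Finset.sum_congr rfl h, Finset.sum_const, Finset.card_compl, hScard,
        nsmul_eq_mul, Nat.cast_sub hα_le_n]
    rw [hS1, hS2]
    have hak : a ^ k = r ^ k * b ^ k := by rw [hadef, mul_pow]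
    rw [hak]
    linear_combination hbkT - (b ^ k) * hTdef
  -- double counting
  have hdc : t * m₁ = ∑ i ∈ S, (E.filter fun e => i ∈ e).card := by
    have h1 : ∀ i ∈ S, (E.filter fun e => i ∈ e).card = ∑ e ∈ E, if i ∈ e then 1 else 0 :=
      fun i _ => Finset.card_filter _ _
    rw [Finset.sum_congr rfl h1, Finset.sum_comm]
    have h2 : ∀ e ∈ E, (∑ i ∈ S, if i ∈ e then 1 else 0) = (e ∩ S).card := by
      intro e he
      rw [← Finset.card_filter, Finset.filter_mem_eq_inter, Finset.inter_comm]
    rw [Finset.sum_congr rfl h2,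
      ← Finset.sum_filter_add_sum_filter_not E (fun e => (e ∩ S).Nonempty)]
    have h3 : ∀ e ∈ E.filter (fun e => (e ∩ S).Nonempty), (e ∩ S).card = t := by
      intro e he
      obtain ⟨heE, hne⟩ := Finset.mem_filter.1 he
      exact hcardt e heE hne
    have h4 : ∀ e ∈ E.filter (fun e => ¬ (e ∩ S).Nonempty), (e ∩ S).card = 0 := by
      intro e he
      obtain ⟨_, hne⟩ := Finset.mem_filter.1 he
      rw [Finset.not_nonempty_iff_eq_empty.1 hne, Finset.card_empty]
    rw [Finset.sum_congr rfl h3, Finset.sum_congr rfl h4, Finset.sum_const,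
      Finset.sum_const, smul_zero, add_zero, smul_eq_mul, ← hm₁def, mul_comm]
  have hupnat : α * δ ≤ t * m₁ := by
    rw [hdc]
    calc α * δ = ∑ _i ∈ S, δ := by rw [Finset.sum_const, smul_eq_mul, hScard, mul_comm]
      _ ≤ ∑ i ∈ S, (E.filter fun e => i ∈ e).card := Finset.sum_le_sum fun i _ => hdeg i
  have hm₁R : (α:ℝ) * δ ≤ (t:ℝ) * m₁ := by exact_mod_cast hupnat
  have hm12R : (m₁:ℝ) + m₂ = E.card := by exact_mod_cast hm12
  -- the key algebraic identity
  have habk : a ^ t * b ^ (k - t) = r ^ t * b ^ k := by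
    rw [hadef, mul_pow, mul_assoc, ← pow_add]
    congr 2
    omega
  have hE2B : (k:ℝ) * ((t:ℝ) * E.card - (α:ℝ) * δ * (r ^ t + 1)) * B
      = (t:ℝ) * lam * T * B := by
    rw [hTdef]
    linear_combination (-(k:ℝ) * α * δ) * hrtB + ((t:ℝ) * α) * hrkB - hkey
  have hE2 : (k:ℝ) * ((t:ℝ) * E.card - (α:ℝ) * δ * (r ^ t + 1)) = (t:ℝ) * lam * T :=
    mul_right_cancel₀ hB.ne' hE2B
  have hg : (k:ℝ) * ((t:ℝ) * E.card * b ^ k - (α:ℝ) * δ * (a ^ t * b ^ (k - t) + b ^ k))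
      = (t:ℝ) * lam := by
    rw [habk]
    linear_combination (b ^ k) * hE2 + ((t:ℝ) * lam) * hbkT
  -- value equals lam
  have hlow : lam ≤ (k:ℝ) * ∑ e ∈ E, ∏ i ∈ e, x i := by
    have := hyp_homog k hk hk0 E huniform lam hlam x
    rwa [hx1, mul_one] at this
  have hABpos : (0:ℝ) < a ^ t * b ^ (k - t) := by positivity
  have hup : (t:ℝ) * ((k:ℝ) * ∑ e ∈ E, ∏ i ∈ e, x i)
      ≤ (k:ℝ) * ((t:ℝ) * E.card * b ^ k - (α:ℝ) * δ * (a ^ t * b ^ (k - t) + b ^ k)) := by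
    rw [hsumE]
    have h1 : (0:ℝ) ≤ (t:ℝ) * m₁ - (α:ℝ) * δ := by linarith
    have h2 : (0:ℝ) ≤ (k:ℝ) := by positivity
    have hint : (0:ℝ) ≤ (k:ℝ) * ((t:ℝ) * m₁ - (α:ℝ) * δ) * (a ^ t * b ^ (k - t) + b ^ k) := by
      positivity
    have hdiff : (k:ℝ) * ((t:ℝ) * E.card * b ^ k - (α:ℝ) * δ * (a ^ t * b ^ (k - t) + b ^ k))
        - (t:ℝ) * ((k:ℝ) * ((m₁:ℝ) * (-(a ^ t * b ^ (k - t))) + (m₂:ℝ) * b ^ k))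
        = (k:ℝ) * ((t:ℝ) * m₁ - (α:ℝ) * δ) * (a ^ t * b ^ (k - t) + b ^ k) := by
      linear_combination (-(k:ℝ) * t * b ^ k) * hm12R
    linarith [hint, hdiff]
  have hvaleq : (k:ℝ) * ∑ e ∈ E, ∏ i ∈ e, x i = lam := by
    have ht0R : (0:ℝ) < t := by exact_mod_cast ht0
    have h1 : (t:ℝ) * ((k:ℝ) * ∑ e ∈ E, ∏ i ∈ e, x i) ≤ (t:ℝ) * lam := by
      rw [← hg]; exact hup
    have h2 : (k:ℝ) * ∑ e ∈ E, ∏ i ∈ e, x i ≤ lam := by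
      exact le_of_mul_le_mul_left h1 ht0R
    exact le_antisymm h2 hlow
  -- eigen equations
  have heig := fun v => hyp_eigen k hk hk0 E huniform lam hlam x hx1 hvaleq v
  have hlamq : lam * q = -(δ:ℝ) := by
    have hq2 : q * (-lam) = (δ:ℝ) := by rw [hqdef]; exact div_mul_cancel₀ _ hβ.ne'
    linear_combination -hq2
  refine ⟨S, hS, hScard, ?_, ?_⟩
  · -- degrees in S are δ
    intro i hi
    have heq3 := heig i
    have hprod_e : ∀ e ∈ E.filter (fun e => i ∈ e),
        ∏ j ∈ e.erase i, x j = -(a ^ (t - 1) * b ^ (k - t)) := by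
      intro e he
      obtain ⟨heE, hie⟩ := Finset.mem_filter.1 he
      have hne : (e ∩ S).Nonempty := ⟨i, Finset.mem_inter.2 ⟨hie, hi⟩⟩
      have hct : (e ∩ S).card = t := hcardt e heE hne
      rw [hprodF (e.erase i)]
      have hc1 : ((e.erase i) ∩ S).card = t - 1 := by
        rw [Finset.erase_inter, Finset.card_erase_of_mem (Finset.mem_inter.2 ⟨hie, hi⟩), hct]
      have hc2 : (e.erase i).card = k - 1 := by
        rw [Finset.card_erase_of_mem hie, huniform e heE]
      rw [hc1, hc2, show k - 1 - (t - 1) = k - t by omega, hoddkt.neg_pow]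
      ring
    rw [Finset.sum_congr rfl hprod_e, Finset.sum_const, nsmul_eq_mul] at heq3
    have hxi : x i = a := by simp [hxdef, hi]
    rw [hxi] at heq3
    -- lam * a^(k-1) = -(δ * (a^(t-1) * b^(k-t)))
    have hA : lam * a ^ (k - 1) = -((δ:ℝ) * (a ^ (t - 1) * b ^ (k - t))) := by
      have h1 : a ^ (k - 1) = a ^ (t - 1) * a ^ (k - t) := by
        rw [← pow_add]
        congr 1
        omega
      have h2 : a ^ (k - t) = q * b ^ (k - t) := by
        rw [hadef, mul_pow, hrkt]
      rw [h1, h2]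
      linear_combination (a ^ (t - 1) * b ^ (k - t)) * hlamq
    rw [hA] at heq3
    have hpapos : (0:ℝ) < a ^ (t - 1) * b ^ (k - t) := by positivity
    have hz : (((E.filter fun e => i ∈ e).card : ℝ) - (δ:ℝ))
        * (a ^ (t - 1) * b ^ (k - t)) = 0 := by
      linear_combination -heq3
    have : ((E.filter fun e => i ∈ e).card : ℝ) = (δ:ℝ) := by
      rcases mul_eq_zero.1 hz with h | h
      · linarith
      · exact absurd h hpapos.ne'
    exact_mod_cast this
  · -- vertices outside S
    intro i hi
    have heq4 := heig i
    set di : ℕ := (E.filter fun e => i ∈ e).card with hdidef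
    set ei : ℕ := (E.filter fun e => i ∈ e ∧ (e ∩ S).Nonempty).card with heidef
    have hsplit : (E.filter fun e => i ∈ e)
        = ((E.filter fun e => i ∈ e).filter fun e => (e ∩ S).Nonempty)
          ∪ ((E.filter fun e => i ∈ e).filter fun e => ¬ (e ∩ S).Nonempty) :=
      (Finset.filter_union_filter_not_eq _ _).symm
    rw [← Finset.sum_filter_add_sum_filter_not (E.filter fun e => i ∈ e)
      (fun e => (e ∩ S).Nonempty)] at heq4
    have hff : (E.filter fun e => i ∈ e).filter (fun e => (e ∩ S).Nonempty)
        = E.filter fun e => i ∈ e ∧ (e ∩ S).Nonempty := by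
      rw [Finset.filter_filter]
    have hprod1 : ∀ e ∈ (E.filter fun e => i ∈ e).filter (fun e => (e ∩ S).Nonempty),
        ∏ j ∈ e.erase i, x j = a ^ t * b ^ (k - 1 - t) := by
      intro e he
      obtain ⟨he', hne⟩ := Finset.mem_filter.1 he
      obtain ⟨heE, hie⟩ := Finset.mem_filter.1 he'
      have hct : (e ∩ S).card = t := hcardt e heE hne
      rw [hprodF (e.erase i)]
      have hc1 : ((e.erase i) ∩ S).card = t := by
        rw [Finset.erase_inter, Finset.erase_eq_of_notMem
          (fun hmem => hi (Finset.mem_inter.1 hmem).2), hct]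
      have hc2 : (e.erase i).card = k - 1 := by
        rw [Finset.card_erase_of_mem hie, huniform e heE]
      have heven : Even (k - 1 - t) := by
        have h1 : k - 1 - t = k - (t + 1) := by omega
        rw [h1]
        exact (Nat.even_sub (by omega)).2 (iff_of_true hk ht.add_one)
      rw [hc1, hc2, heven.neg_pow]
    have hprod2 : ∀ e ∈ (E.filter fun e => i ∈ e).filter (fun e => ¬ (e ∩ S).Nonempty),
        ∏ j ∈ e.erase i, x j = -(b ^ (k - 1)) := by
      intro e he
      obtain ⟨he', hne⟩ := Finset.mem_filter.1 he
      obtain ⟨heE, hie⟩ := Finset.mem_filter.1 he'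
      have h0 : (e ∩ S).card = 0 := by
        rw [Finset.not_nonempty_iff_eq_empty.1 hne, Finset.card_empty]
      rw [hprodF (e.erase i)]
      have hc1 : ((e.erase i) ∩ S).card = 0 := by
        have : ((e.erase i) ∩ S).card ≤ (e ∩ S).card :=
          Finset.card_le_card (Finset.inter_subset_inter (Finset.erase_subset i e)
            (Finset.Subset.refl S))
        omega
      have hc2 : (e.erase i).card = k - 1 := by
        rw [Finset.card_erase_of_mem hie, huniform e heE]
      have hodd : Odd (k - 1) := Nat.Even.sub_odd (by omega) hk odd_one
      rw [hc1, hc2, pow_zero, one_mul, Nat.sub_zero, hodd.neg_pow]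
    rw [Finset.sum_congr rfl hprod1, Finset.sum_congr rfl hprod2, Finset.sum_const,
      Finset.sum_const, nsmul_eq_mul, nsmul_eq_mul] at heq4
    rw [hff] at heq4
    have hxi : x i = -b := by simp [hxdef, hi]
    rw [hxi] at heq4
    have hd2 : ((E.filter fun e => i ∈ e).filter (fun e => ¬ (e ∩ S).Nonempty)).card
        = di - ei := by
      have := Finset.card_filter_add_card_filter_not
        (s := E.filter fun e => i ∈ e) (p := fun e => (e ∩ S).Nonempty)
      rw [hff] at this
      omega
    rw [hd2] at heq4
    have heile : ei ≤ di := by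
      rw [heidef, hdidef, ← hff]
      exact Finset.card_le_card (Finset.filter_subset _ _)
    -- heq4 : ei * (a^t * b^(k-1-t)) + (di - ei) * (-(b^(k-1))) = lam * (-b)^(k-1)
    have hcast : ((di - ei : ℕ) : ℝ) = (di:ℝ) - ei := by
      exact Nat.cast_sub heile
    rw [hcast] at heq4
    have hoddk1 : Odd (k - 1) := Nat.Even.sub_odd (by omega) hk odd_one
    rw [hoddk1.neg_pow] at heq4
    have habk1 : a ^ t * b ^ (k - 1 - t) = r ^ t * b ^ (k - 1) := by
      rw [hadef, mul_pow, mul_assoc, ← pow_add]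
      congr 2
      omega
    rw [habk1] at heq4
    -- heq4 : ei * (r^t * b^(k-1)) + (di - ei) * (-(b^(k-1))) = lam * -(b^(k-1))
    have hbk1 : (0:ℝ) < b ^ (k - 1) := by positivity
    have hlin : (ei:ℝ) * (r ^ t + 1) = (di:ℝ) - lam := by
      have h := heq4
      have h2 : ((ei:ℝ) * (r ^ t + 1) - ((di:ℝ) - lam)) * b ^ (k - 1) = 0 := by
        linear_combination h
      rcases mul_eq_zero.1 h2 with h3 | h3
      · linarith
      · exact absurd h3 hbk1.ne'
    -- multiply by B
    have hfin : (ei:ℝ) * (D + B) = (di:ℝ) * B + (-lam) * B := by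
      linear_combination B * hlin - (ei:ℝ) * hrtB
    have hβk : (-lam) ^ ((k:ℝ) / ((k:ℝ) - t)) = (-lam) * B := by
      rw [show (k:ℝ) / ((k:ℝ) - t) = 1 + (t:ℝ) / ((k:ℝ) - t) by field_simp; ring,
        Real.rpow_add hβ, Real.rpow_one, hBdef]
    rw [hβk]
    rw [eq_div_iff (by positivity : D + B ≠ 0)]
    linarith [hfin]
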